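/- arXiv:1601.07770 — 2 statements merged into one kernel-verified Lean document; each statement's English description precedes it below -/
import Mathlib

section
/- The function T(z) = (-1 + sqrt((1+c·T_a)² + 2c·τ(z)))/c with τ(z) as defined satisfies the flux boundary condition [k₀(1+cT(z))·dT/dz] evaluated at z = ℓ/2 equals -q. -/
/-- The flux boundary condition `[k₀(1+cT(z))·dT/dz]_{z=ℓ/2} = -q`. -/
theorem stmt2 (ℓ k₀ c Q q Ta : ℝ) (hℓ : 0 < ℓ) (hk : 0 < k₀) (hc : 0 < c)
    (hQ : 0 < Q) (hq : 0 < q) (hTa : 0 < Ta)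
    (τ : ℝ → ℝ)
    (hτ : ∀ z, τ z = Q / (2 * k₀) * (3 * ℓ ^ 2 / 4 + z * ℓ - z ^ 2) - q / k₀ * (z + ℓ / 2))
    (T : ℝ → ℝ)
    (hT : ∀ z, T z = (-1 + Real.sqrt ((1 + c * Ta) ^ 2 + 2 * c * τ z)) / c)
    (hpos : ∀ z ∈ Set.Icc (-ℓ/2) (ℓ/2), 0 < (1 + c * Ta) ^ 2 + 2 * c * τ z) :
    k₀ * (1 + c * T (ℓ/2)) * deriv T (ℓ/2) = -q := by
  set x := ℓ/2 with hx
  have hmem : x ∈ Set.Icc (-ℓ/2) (ℓ/2) := ⟨by simp [hx]; linarith, le_refl _⟩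
  have hS : 0 < (1 + c * Ta) ^ 2 + 2 * c * τ x := hpos x hmem
  set S := (1 + c * Ta) ^ 2 + 2 * c * τ x with hSdef
  have hsqS : 0 < Real.sqrt S := Real.sqrt_pos.mpr hS
  have hτd : HasDerivAt τ (-q / k₀) x := by
    have h1 := ((((hasDerivAt_const x (3 * ℓ ^ 2 / 4)).add ((hasDerivAt_id x).mul_const ℓ)).sub
        (hasDerivAt_pow 2 x)).const_mul (Q / (2 * k₀))).sub
        (((hasDerivAt_id x).add_const (ℓ / 2)).const_mul (q / k₀))
    have heq : τ = fun z : ℝ => Q / (2 * k₀) * (3 * ℓ ^ 2 / 4 + z * ℓ - z ^ 2)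
        - q / k₀ * (z + ℓ / 2) := funext hτ
    rw [heq]
    refine h1.congr_deriv ?_
    · norm_num [hx]
      ring
  have hSd : HasDerivAt (fun z => (1 + c * Ta) ^ 2 + 2 * c * τ z) (2 * c * (-q / k₀)) x :=
    (hτd.const_mul (2 * c)).const_add _
  have hsq : HasDerivAt (fun z => Real.sqrt ((1 + c * Ta) ^ 2 + 2 * c * τ z))
      (2 * c * (-q / k₀) / (2 * Real.sqrt S)) x :=
    hSd.sqrt (ne_of_gt hS)
  have hTd : HasDerivAt T (2 * c * (-q / k₀) / (2 * Real.sqrt S) / c) x := by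
    have heq : T = fun z => (Real.sqrt ((1 + c * Ta) ^ 2 + 2 * c * τ z) + -1) / c :=
      funext fun z => by rw [hT z]; ring
    rw [heq]
    exact (hsq.add_const (-1)).div_const c
  have hderiv : deriv T x = 2 * c * (-q / k₀) / (2 * Real.sqrt S) / c := hTd.deriv
  have hcT : 1 + c * T x = Real.sqrt S := by
    rw [hT x]
    field_simp
    rw [hSdef]; ring_nf
  rw [hderiv, hcT]
  field_simp
end

section
/- The partial derivative of T(z_r) with respect to k₀ equals -τ(z_r)/(k₀(1 + cT(z_r))), where τ(z_r) = (Q/(2k₀))·(3ℓ²/4 + z_rℓ - z_r²) - (q/k₀)·(z_r + ℓ/2) depends on k₀ as 1/k₀ times a k₀-independent quantity. -/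
set_option maxHeartbeats 1000000


/-- `∂T(z_r)/∂k₀ = -τ(z_r)/(k₀(1 + cT(z_r)))`, where `τ(z_r) = A/k₀` with `A`
independent of `k₀`. -/
theorem stmt11 (ℓ k₀ c Q q Ta zr : ℝ) (hℓ : 0 < ℓ) (hk : 0 < k₀) (hc : 0 < c)
    (hQ : 0 < Q) (hq : 0 < q) (hTa : 0 < Ta)
    (A : ℝ) (hA : A = Q / 2 * (3 * ℓ ^ 2 / 4 + zr * ℓ - zr ^ 2) - q * (zr + ℓ / 2))
    (τr : ℝ) (hτ : τr = A / k₀)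
    (hpos : 0 < (1 + c * Ta) ^ 2 + 2 * c * τr)
    (Tr : ℝ) (hT : Tr = (-1 + Real.sqrt ((1 + c * Ta) ^ 2 + 2 * c * τr)) / c) :
    HasDerivAt
      (fun k : ℝ => (-1 + Real.sqrt ((1 + c * Ta) ^ 2 + 2 * c * (A / k))) / c)
      (-τr / (k₀ * (1 + c * Tr))) k₀ := by
  have hu : (1 + c * Ta) ^ 2 + 2 * c * (A / k₀) = (1 + c * Ta) ^ 2 + 2 * c * τr := by
    rw [hτ]
  have hupos : 0 < (1 + c * Ta) ^ 2 + 2 * c * (A / k₀) := hu ▸ hpos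
  have hs : 0 < Real.sqrt ((1 + c * Ta) ^ 2 + 2 * c * (A / k₀)) := Real.sqrt_pos.mpr hupos
  have h1 : HasDerivAt (fun k : ℝ => A / k) ((0 * k₀ - A * 1) / k₀ ^ 2) k₀ :=
    (hasDerivAt_const k₀ A).div (hasDerivAt_id k₀) hk.ne'
  have hg : HasDerivAt (fun k : ℝ => (1 + c * Ta) ^ 2 + 2 * c * (A / k))
      (2 * c * ((0 * k₀ - A * 1) / k₀ ^ 2)) k₀ := (h1.const_mul (2 * c)).const_add _
  have hsq := (Real.hasDerivAt_sqrt hupos.ne').comp k₀ hg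
  have hfull := ((hsq.const_add (-1)).div_const c)
  refine hfull.congr_deriv ?_
  have h1T : 1 + c * Tr = Real.sqrt ((1 + c * Ta) ^ 2 + 2 * c * (A / k₀)) := by
    rw [hT, hu]; field_simp; ring
  rw [h1T, hτ]
  set s := Real.sqrt ((1 + c * Ta) ^ 2 + 2 * c * (A / k₀)) with hsdef
  field_simp
  ring
end
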